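/- Let X be a permutation and let a ≠ b be elements of X such that a and b are neighbors and every element of X∖{a, b} is a neighbor of a or a neighbor of b. Then X has at most eight elements. -/

import Mathlib

/-- A permutation: a finite set equipped with two linear orders. -/
structure Perm2 : Type 1 where
  A : Type
  fin : Fintype A
  ord1 : LinearOrder A
  ord2 : LinearOrder A

attribute [instance] Perm2.fin

/-- Two distinct elements are adjacent for the linear order `r` if no element lies
strictly between them. -/
def Adj {α : Type} (r : LinearOrder α) (x y : α) : Prop :=
  x ≠ y ∧ ¬∃ z : α, (r.lt x z ∧ r.lt z y) ∨ (r.lt y z ∧ r.lt z x)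

/-- Two elements of a permutation are neighbors if they are adjacent for either of the
two orders. -/
def Neighbors (X : Perm2) (x y : X.A) : Prop :=
  Adj X.ord1 x y ∨ Adj X.ord2 x y

lemma adj_ncard_le {α : Type} [Fintype α] (r : LinearOrder α) (x : α) :
    Set.ncard {y | Adj r x y} ≤ 2 := by
  letI := r
  have hsub : {y | Adj r x y} ⊆ {y | Adj r x y ∧ x < y} ∪ {y | Adj r x y ∧ y < x} := by
    intro y hy
    rcases lt_trichotomy x y with hlt | heq | hgt
    · exact Or.inl ⟨hy, hlt⟩
    · exact absurd heq hy.1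
    · exact Or.inr ⟨hy, hgt⟩
  have h1 : Set.ncard {y | Adj r x y ∧ x < y} ≤ 1 := by
    rw [Set.ncard_le_one_iff (Set.toFinite _)]
    intro y1 y2 hy1 hy2
    by_contra hne
    rcases lt_or_gt_of_ne hne with hlt | hgt
    · exact hy2.1.2 ⟨y1, Or.inl ⟨hy1.2, hlt⟩⟩
    · exact hy1.1.2 ⟨y2, Or.inl ⟨hy2.2, hgt⟩⟩
  have h2 : Set.ncard {y | Adj r x y ∧ y < x} ≤ 1 := by
    rw [Set.ncard_le_one_iff (Set.toFinite _)]
    intro y1 y2 hy1 hy2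
    by_contra hne
    rcases lt_or_gt_of_ne hne with hlt | hgt
    · exact hy1.1.2 ⟨y2, Or.inr ⟨hlt, hy2.2⟩⟩
    · exact hy2.1.2 ⟨y1, Or.inr ⟨hgt, hy1.2⟩⟩
  calc Set.ncard {y | Adj r x y}
      ≤ Set.ncard ({y | Adj r x y ∧ x < y} ∪ {y | Adj r x y ∧ y < x}) :=
        Set.ncard_le_ncard hsub (Set.toFinite _)
    _ ≤ Set.ncard {y | Adj r x y ∧ x < y} + Set.ncard {y | Adj r x y ∧ y < x} :=
        Set.ncard_union_le _ _
    _ ≤ 2 := by omega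

lemma nbr_ncard_le (X : Perm2) (x : X.A) :
    Set.ncard {y | Neighbors X x y} ≤ 4 := by
  have hsub : {y | Neighbors X x y} ⊆ {y | Adj X.ord1 x y} ∪ {y | Adj X.ord2 x y} :=
    fun y hy => hy
  calc Set.ncard {y | Neighbors X x y}
      ≤ Set.ncard ({y | Adj X.ord1 x y} ∪ {y | Adj X.ord2 x y}) :=
        Set.ncard_le_ncard hsub (Set.toFinite _)
    _ ≤ Set.ncard {y | Adj X.ord1 x y} + Set.ncard {y | Adj X.ord2 x y} :=
        Set.ncard_union_le _ _
    _ ≤ 4 := by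
        have := adj_ncard_le X.ord1 x
        have := adj_ncard_le X.ord2 x
        omega

lemma neighbors_symm (X : Perm2) {x y : X.A} (h : Neighbors X x y) : Neighbors X y x := by
  rcases h with ⟨hne, hz⟩ | ⟨hne, hz⟩
  · exact Or.inl ⟨hne.symm, fun ⟨z, hz'⟩ => hz ⟨z, hz'.symm⟩⟩
  · exact Or.inr ⟨hne.symm, fun ⟨z, hz'⟩ => hz ⟨z, hz'.symm⟩⟩

/-- If a and b are neighbors in a permutation X and every other element is a neighbor
of a or of b, then X has at most eight elements. -/
theorem minimal_Q_datum_le_eight (X : Perm2) (a b : X.A) (hab : a ≠ b)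
    (hn : Neighbors X a b)
    (h : ∀ c : X.A, c ≠ a → c ≠ b → Neighbors X a c ∨ Neighbors X b c) :
    Nat.card X.A ≤ 8 := by
  have hcover : (Set.univ : Set X.A) ⊆
      ({a, b} : Set X.A) ∪ ({y | Neighbors X a y} \ {b}) ∪ ({y | Neighbors X b y} \ {a}) := by
    intro c _
    by_cases hca : c = a
    · exact Or.inl (Or.inl (Or.inl hca))
    by_cases hcb : c = b
    · exact Or.inl (Or.inl (Or.inr hcb))
    rcases h c hca hcb with hc | hc
    · exact Or.inl (Or.inr ⟨hc, hcb⟩)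
    · exact Or.inr ⟨hc, hca⟩
  have hna : Set.ncard ({y | Neighbors X a y} \ {b}) ≤ 3 := by
    have hb : b ∈ {y | Neighbors X a y} := hn
    rw [Set.ncard_diff_singleton_of_mem hb]
    have := nbr_ncard_le X a
    omega
  have hnb : Set.ncard ({y | Neighbors X b y} \ {a}) ≤ 3 := by
    have ha : a ∈ {y | Neighbors X b y} := neighbors_symm X hn
    rw [Set.ncard_diff_singleton_of_mem ha]
    have := nbr_ncard_le X b
    omega
  have hpair : Set.ncard ({a, b} : Set X.A) ≤ 2 := Set.ncard_insert_le _ _ |>.trans (by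
    simp [Set.ncard_singleton])
  calc Nat.card X.A = Set.ncard (Set.univ : Set X.A) := (Set.ncard_univ _).symm
    _ ≤ Set.ncard (({a, b} : Set X.A) ∪ ({y | Neighbors X a y} \ {b})
        ∪ ({y | Neighbors X b y} \ {a})) := Set.ncard_le_ncard hcover (Set.toFinite _)
    _ ≤ Set.ncard (({a, b} : Set X.A) ∪ ({y | Neighbors X a y} \ {b}))
        + Set.ncard ({y | Neighbors X b y} \ {a}) := Set.ncard_union_le _ _
    _ ≤ Set.ncard ({a, b} : Set X.A) + Set.ncard ({y | Neighbors X a y} \ {b})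
        + Set.ncard ({y | Neighbors X b y} \ {a}) := by
        have := Set.ncard_union_le ({a, b} : Set X.A) ({y | Neighbors X a y} \ {b})
        omega
    _ ≤ 8 := by omega
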